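/- arXiv:math/9609207 — 2 statements merged into one kernel-verified Lean document; each statement's English description precedes it below -/
import Mathlib

section
/- Let $H = \{z \in \mathbb{C}^3 : |z_i| \le 1\ (i=0,1,2)\}$. Suppose $g, h : H \to \mathbb{C}$ satisfy $|g(z) - (f + f_0 z_0 + f_1 z_1 + f_2 z_2)| \le e$ and $|h(z) - (f' + f'_0 z_0 + f'_1 z_1 + f'_2 z_2)| \le e'$ for all $z \in H$. Write $S = |f_0| + |f_1| + |f_2|$ and $S' = |f'_0| + |f'_1| + |f'_2|$. Then for all $z \in H$, $$|g(z)h(z) - \big(ff' + (f f'_0 + f_0 f') z_0 + (f f'_1 + f_1 f') z_1 + (f f'_2 + f_2 f') z_2\big)| \le (S+e)(S'+e') + |f| e' + |f'| e.$$ -/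
theorem acj_mul_correct (f f0 f1 f2 f' f0' f1' f2' : ℂ) (e e' : ℝ)
    (g h : (Fin 3 → ℂ) → ℂ)
    (hg : ∀ z : Fin 3 → ℂ, (∀ i, ‖z i‖ ≤ 1) →
      ‖g z - (f + f0 * z 0 + f1 * z 1 + f2 * z 2)‖ ≤ e)
    (hh : ∀ z : Fin 3 → ℂ, (∀ i, ‖z i‖ ≤ 1) →
      ‖h z - (f' + f0' * z 0 + f1' * z 1 + f2' * z 2)‖ ≤ e') :
    ∀ z : Fin 3 → ℂ, (∀ i, ‖z i‖ ≤ 1) →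
      ‖g z * h z -
        (f * f' + (f * f0' + f0 * f') * z 0 + (f * f1' + f1 * f') * z 1 +
          (f * f2' + f2 * f') * z 2)‖ ≤
      (‖f0‖ + ‖f1‖ + ‖f2‖ + e) *
          (‖f0'‖ + ‖f1'‖ + ‖f2'‖ + e') +
        ‖f‖ * e' + ‖f'‖ * e := by
  intro z hz
  set D : ℂ := f0 * z 0 + f1 * z 1 + f2 * z 2 with hDdef
  set D' : ℂ := f0' * z 0 + f1' * z 1 + f2' * z 2 with hD'def
  have hu : ‖g z - (f + D)‖ ≤ e := by
    have := hg z hz; rw [hDdef]; simpa [add_assoc] using this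
  have hv : ‖h z - (f' + D')‖ ≤ e' := by
    have := hh z hz; rw [hD'def]; simpa [add_assoc] using this
  have bD : ‖D‖ ≤ ‖f0‖ + ‖f1‖ + ‖f2‖ := by
    rw [hDdef]
    calc ‖f0 * z 0 + f1 * z 1 + f2 * z 2‖
        ≤ ‖f0 * z 0‖ + ‖f1 * z 1‖ + ‖f2 * z 2‖ :=
          (norm_add_le _ _).trans (by gcongr; exact norm_add_le _ _)
      _ ≤ ‖f0‖ + ‖f1‖ + ‖f2‖ := by
          simp only [norm_mul]
          have h0 :=
            mul_le_of_le_one_right (norm_nonneg f0) (hz 0)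
          have h1 :=
            mul_le_of_le_one_right (norm_nonneg f1) (hz 1)
          have h2 :=
            mul_le_of_le_one_right (norm_nonneg f2) (hz 2)
          linarith
  have bD' : ‖D'‖ ≤ ‖f0'‖ + ‖f1'‖ + ‖f2'‖ := by
    rw [hD'def]
    calc ‖f0' * z 0 + f1' * z 1 + f2' * z 2‖
        ≤ ‖f0' * z 0‖ + ‖f1' * z 1‖ + ‖f2' * z 2‖ :=
          (norm_add_le _ _).trans (by gcongr; exact norm_add_le _ _)
      _ ≤ ‖f0'‖ + ‖f1'‖ + ‖f2'‖ := by
          simp only [norm_mul]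
          have h0 :=
            mul_le_of_le_one_right (norm_nonneg f0') (hz 0)
          have h1 :=
            mul_le_of_le_one_right (norm_nonneg f1') (hz 1)
          have h2 :=
            mul_le_of_le_one_right (norm_nonneg f2') (hz 2)
          linarith
  have key : g z * h z -
      (f * f' + (f * f0' + f0 * f') * z 0 + (f * f1' + f1 * f') * z 1 +
        (f * f2' + f2 * f') * z 2)
      = (D + (g z - (f + D))) * (D' + (h z - (f' + D')))
        + f * (h z - (f' + D')) + (g z - (f + D)) * f' := by
    rw [hDdef, hD'def]; ring
  rw [key]
  have h1 : ‖D + (g z - (f + D))‖ ≤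
      ‖f0‖ + ‖f1‖ + ‖f2‖ + e :=
    (norm_add_le _ _).trans (by gcongr)
  have h2 : ‖D' + (h z - (f' + D'))‖ ≤
      ‖f0'‖ + ‖f1'‖ + ‖f2'‖ + e' :=
    (norm_add_le _ _).trans (by gcongr)
  calc ‖(D + (g z - (f + D))) * (D' + (h z - (f' + D')))
        + f * (h z - (f' + D')) + (g z - (f + D)) * f'‖
      ≤ ‖(D + (g z - (f + D))) * (D' + (h z - (f' + D')))‖
        + ‖f * (h z - (f' + D'))‖ + ‖(g z - (f + D)) * f'‖ :=
        (norm_add_le _ _).trans (by gcongr; exact norm_add_le _ _)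
    _ ≤ (‖f0‖ + ‖f1‖ + ‖f2‖ + e) *
          (‖f0'‖ + ‖f1'‖ + ‖f2'‖ + e') +
        ‖f‖ * e' + ‖f'‖ * e := by
        simp only [norm_mul]
        have e1 : ‖D + (g z - (f + D))‖ * ‖D' + (h z - (f' + D'))‖
            ≤ (‖f0‖ + ‖f1‖ + ‖f2‖ + e) *
              (‖f0'‖ + ‖f1'‖ + ‖f2'‖ + e') :=
          mul_le_mul h1 h2 (norm_nonneg _)
            (le_trans (norm_nonneg _) h1)
        have e2 : ‖f‖ * ‖h z - (f' + D')‖ ≤ ‖f‖ * e' :=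
          mul_le_mul_of_nonneg_left hv (norm_nonneg f)
        have e3 : ‖g z - (f + D)‖ * ‖f'‖ ≤ ‖f'‖ * e := by
          rw [mul_comm (‖f'‖) e]
          exact mul_le_mul_of_nonneg_right hu (norm_nonneg f')
        linarith
end

section
/- Let $x \in \mathbb{R}$ with $0 \le x < 1$, and let $t \in \mathbb{C}$ with $|t| \le x$. Then $$\left|\sqrt{1+t} - \left(1 + \frac{t}{2}\right)\right| \le 1 - \frac{x}{2} - \sqrt{1-x},$$ where $\sqrt{\cdot}$ denotes the principal branch of the complex square root. -/
set_option maxHeartbeats 800000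

theorem sqrt_linearization_error (x : ℝ) (hx0 : 0 ≤ x) (hx1 : x < 1)
    (t : ℂ) (ht : ‖t‖ ≤ x) :
    ‖(1 + t) ^ ((1 : ℂ) / 2) - (1 + t / 2)‖ ≤
      1 - x / 2 - Real.sqrt (1 - x) := by
  set z : ℂ := 1 + t with hz
  set r : ℝ := ‖z‖ with hr
  set a : ℝ := z.re with ha
  set s : ℝ := Real.sqrt (1 - x) with hs
  have hs0 : 0 ≤ s := Real.sqrt_nonneg _
  have hs2 : s ^ 2 = 1 - x := Real.sq_sqrt (by linarith)
  have htre : -x ≤ t.re := by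
    have := neg_abs_le t.re
    have := Complex.abs_re_le_norm t
    linarith
  have ha1 : 1 - x ≤ a := by simp [ha, hz]; linarith
  have hra : a ≤ r := by
    have := Complex.re_le_norm z
    linarith
  have hr2 : r ^ 2 ≤ 2 * a - 1 + x ^ 2 := by
    have h1 : r ^ 2 = (1 + t.re) ^ 2 + t.im ^ 2 := by
      rw [hr, Complex.sq_norm, Complex.normSq_apply]
      simp [hz]; ring
    have h2 : t.re ^ 2 + t.im ^ 2 ≤ x ^ 2 := by
      have := Complex.sq_norm t
      rw [Complex.normSq_apply] at this
      nlinarith [norm_nonneg t]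
    have h3 : a = 1 + t.re := by simp [ha, hz]
    nlinarith
  set w : ℂ := z ^ ((1 : ℂ) / 2) with hw
  have hw2 : w ^ 2 = z := by
    rw [hw, one_div]
    have : ((2 : ℂ))⁻¹ = (((2 : ℕ) : ℂ))⁻¹ := by norm_num
    rw [this]
    exact Complex.cpow_nat_inv_pow z two_ne_zero
  have hwre : w.re = Real.sqrt ((r + a) / 2) := by
    rw [hw, one_div]
    exact Complex.cpow_inv_two_re z
  have hwre2 : w.re ^ 2 = (r + a) / 2 := by
    rw [hwre]; exact Real.sq_sqrt (by linarith)
  have hwabs : w.re ^ 2 + w.im ^ 2 = r := by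
    have : ‖w‖ ^ 2 = r := by
      rw [← norm_pow, hw2]
    rw [Complex.sq_norm, Complex.normSq_apply] at this
    nlinarith
  -- error identity
  have herr : (1 + t) ^ ((1 : ℂ) / 2) - (1 + t / 2) = -((w - 1) ^ 2) / 2 := by
    have h1 : (1 + t) ^ ((1 : ℂ) / 2) = w := by rw [hw, hz]
    have h2 : t = w ^ 2 - 1 := by rw [hw2, hz]; ring
    rw [h1, h2]; ring
  rw [herr]
  have habs : ‖-((w - 1) ^ 2) / 2‖ = ‖w - 1‖ ^ 2 / 2 := by
    rw [norm_div, norm_neg, norm_pow]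
    norm_num
  rw [habs]
  have hab1 : ‖w - 1‖ ^ 2 = r + 1 - 2 * w.re := by
    rw [Complex.sq_norm, Complex.normSq_apply]
    simp only [Complex.sub_re, Complex.sub_im, Complex.one_re, Complex.one_im]
    nlinarith
  rw [hab1]
  clear_value w z r a s
  -- key inequality: r - 1 + x + 2 * s ≤ 2 * w.re
  have hsx : 2 - 2 * s - x ≥ 0 := by nlinarith
  have hkey : r - 1 + x + 2 * s ≤ 2 * w.re := by
    have hlhs : 0 ≤ r - 1 + x + 2 * s := by linarith
    have hwre0 : 0 ≤ w.re := by rw [hwre]; exact Real.sqrt_nonneg _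
    have hsq : (r - 1 + x + 2 * s) ^ 2 ≤ (2 * w.re) ^ 2 := by
      nlinarith [mul_nonneg (by linarith : (0:ℝ) ≤ r - 1 + x) hsx]
    calc r - 1 + x + 2 * s = Real.sqrt ((r - 1 + x + 2 * s) ^ 2) := (Real.sqrt_sq hlhs).symm
      _ ≤ Real.sqrt ((2 * w.re) ^ 2) := Real.sqrt_le_sqrt hsq
      _ = 2 * w.re := Real.sqrt_sq (by linarith)
  linarith
end
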